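/- arXiv:2204.08008 — 7 statements merged into one kernel-verified Lean document; each statement's English description precedes it below -/
import Mathlib

section
/- Let G be a profinite group (a compact, Hausdorff, totally disconnected topological group), Q a finite group, J a closed subgroup of G, and 𝓘 a closed subset of G. Suppose there exists a continuous surjective group homomorphism ρ_J : J → Q such that every element of 𝓘 ∩ J lies in the kernel of ρ_J. Then there exist an open subgroup H of G containing J and a continuous surjective group homomorphism ρ_H : H → Q such that every element of 𝓘 ∩ H lies in the kernel of ρ_H and the restriction of ρ_H to J coincides with ρ_J. -/
open Pointwise


/-- Let `G` be a profinite group, `Q` a finite (discrete) group, `J` a closed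
subgroup of `G` and `𝓘` a closed subset of `G`.  If there is a continuous surjection
`ρ_J : J ↠ Q` killing `𝓘 ∩ J`, then there are an open subgroup `H ⊇ J` of `G` and a continuous
surjection `ρ_H : H ↠ Q` killing `𝓘 ∩ H` and restricting to `ρ_J` on `J`. -/
theorem stmt_3 (G : Type*) [Group G] [TopologicalSpace G] [IsTopologicalGroup G]
    [CompactSpace G] [T2Space G] [TotallyDisconnectedSpace G]
    (Q : Type*) [Group Q] [Finite Q] [TopologicalSpace Q] [DiscreteTopology Q]
    (J : Subgroup G) (hJ : IsClosed (J : Set G))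
    (I : Set G) (hI : IsClosed I)
    (ρJ : J →* Q) (hcJ : Continuous ρJ) (hsJ : Function.Surjective ρJ)
    (hkerJ : ∀ (g : G) (hg : g ∈ J), g ∈ I → ρJ ⟨g, hg⟩ = 1) :
    ∃ (H : Subgroup G) (hJH : J ≤ H), IsOpen (H : Set G) ∧
      ∃ ρH : H →* Q, Continuous ρH ∧ Function.Surjective ρH ∧
        (∀ (g : G) (hg : g ∈ H), g ∈ I → ρH ⟨g, hg⟩ = 1) ∧
        (∀ (g : G) (hg : g ∈ J), ρH ⟨g, hJH hg⟩ = ρJ ⟨g, hg⟩) := by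
  classical
  -- kernel, as a subset of `G`
  set Nset : Set G := {g : G | ∃ hg : g ∈ J, ρJ ⟨g, hg⟩ = 1} with hNset
  -- the kernel is open in `J`, cut out by an open `V ⊆ G`
  have hker_open : IsOpen (ρJ ⁻¹' {1}) := (isOpen_discrete _).preimage hcJ
  obtain ⟨V, hVopen, hVeq⟩ := isOpen_induced_iff.mp hker_open
  have hVmem : ∀ (g : G) (hg : g ∈ J), g ∈ V ↔ ρJ ⟨g, hg⟩ = 1 := by
    intro g hg
    constructor
    · intro h
      have : (⟨g, hg⟩ : J) ∈ Subtype.val ⁻¹' V := h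
      rw [hVeq] at this
      simpa using this
    · intro h
      have : (⟨g, hg⟩ : J) ∈ ρJ ⁻¹' {1} := by simpa using h
      rw [← hVeq] at this
      exact this
  have h1V : (1 : G) ∈ V := (hVmem 1 J.one_mem).2 (by rw [show (⟨1, J.one_mem⟩ : J) = 1 from rfl, map_one])
  -- compactness facts
  have hJcomp : IsCompact (J : Set G) := hJ.isCompact
  -- index type: open normal subgroups contained in V
  let ι := {U : OpenNormalSubgroup G // (U : Set G) ⊆ V}
  have hne : Nonempty ι := by
    obtain ⟨W, hWclopen, h1W, hWV⟩ := compact_exists_isClopen_in_isOpen hVopen h1V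
    obtain ⟨U, hU⟩ :=
      IsTopologicalGroup.exist_openNormalSubgroup_sub_clopen_nhds_of_one hWclopen h1W
    exact ⟨⟨U, hU.trans hWV⟩⟩
  have hUcomp : ∀ U : OpenNormalSubgroup G, IsCompact (U : Set G) :=
    fun U => U.toOpenSubgroup.isClosed.isCompact
  -- the key compactness argument, with `K = J ∩ Vᶜ` the complement of the kernel in `J`
  set K : Set G := (J : Set G) ∩ Vᶜ with hK
  have hKclosed : IsClosed K := hJ.inter hVopen.isClosed_compl
  have hKcomp : IsCompact K := hKclosed.isCompact
  have hmain : ∃ U : OpenNormalSubgroup G, (U : Set G) ⊆ V ∧ I ∩ (K * (U : Set G)) = ∅ := by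
    by_contra hcon
    push_neg at hcon
    have hCne : ∀ U : ι, (I ∩ (K * (U.1 : Set G))).Nonempty := by
      intro U
      exact hcon U.1 U.2
    have hdir : Directed (· ⊇ ·) (fun U : ι => I ∩ (K * (U.1 : Set G))) := by
      intro U₁ U₂
      have hsub1 : ((U₁.1 ⊓ U₂.1 : OpenNormalSubgroup G) : Set G) ⊆ (U₁.1 : Set G) :=
        fun x hx => hx.1
      have hsub2 : ((U₁.1 ⊓ U₂.1 : OpenNormalSubgroup G) : Set G) ⊆ (U₂.1 : Set G) :=
        fun x hx => hx.2
      refine ⟨⟨U₁.1 ⊓ U₂.1, fun g hg => U₁.2 (hsub1 hg)⟩, ?_, ?_⟩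
      · exact fun g hg => ⟨hg.1, Set.mul_subset_mul_left hsub1 hg.2⟩
      · exact fun g hg => ⟨hg.1, Set.mul_subset_mul_left hsub2 hg.2⟩
    have hclosed : ∀ U : ι, IsClosed (I ∩ (K * (U.1 : Set G))) :=
      fun U => hI.inter (hKcomp.mul (hUcomp U.1)).isClosed
    obtain ⟨g, hg⟩ := IsCompact.nonempty_iInter_of_directed_nonempty_isCompact_isClosed
      _ hdir hCne (fun U => ((hclosed U).isCompact)) hclosed
    simp only [Set.mem_iInter] at hg
    -- g lies in K
    have hgK : g ∈ K := by
      by_contra hgK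
      have hopen : IsOpen ((g⁻¹ • Kᶜ) ∩ V) :=
        (hKclosed.isOpen_compl.smul g⁻¹).inter hVopen
      have h1mem : (1 : G) ∈ (g⁻¹ • Kᶜ) ∩ V := by
        refine ⟨?_, h1V⟩
        rw [Set.mem_smul_set_iff_inv_smul_mem]
        simpa using hgK
      obtain ⟨W, hWclopen, h1W, hWsub⟩ := compact_exists_isClopen_in_isOpen hopen h1mem
      obtain ⟨U, hU⟩ :=
        IsTopologicalGroup.exist_openNormalSubgroup_sub_clopen_nhds_of_one hWclopen h1W
      obtain ⟨_, hgKU⟩ := hg ⟨U, fun x hx => (hWsub (hU hx)).2⟩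
      obtain ⟨k, hk, u, hu, hku⟩ := hgKU
      have huinv : u⁻¹ ∈ (U : Set G) := inv_mem hu
      have hnotK : u⁻¹ ∈ g⁻¹ • Kᶜ := (hWsub (hU huinv)).1
      rw [Set.mem_smul_set_iff_inv_smul_mem] at hnotK
      simp only [inv_inv, smul_eq_mul] at hnotK
      have hguK : g * u⁻¹ ∈ K := by
        have hke : g * u⁻¹ = k := by rw [← hku]; group
        rw [hke]; exact hk
      exact hnotK hguK
    -- contradiction: g ∈ I ∩ J implies g ∈ V, but g ∈ K means g ∉ V
    obtain ⟨U⟩ := hne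
    obtain ⟨hgI, _⟩ := hg U
    exact hgK.2 ((hVmem g hgK.1).2 (hkerJ g hgK.1 hgI))
  obtain ⟨U, hUV, hUdisj⟩ := hmain
  have hUI : I ∩ ((J : Set G) * (U : Set G)) ⊆ Nset * (U : Set G) := by
    rintro g ⟨hgI, j, hj, u, hu, hju⟩
    by_cases hjV : j ∈ V
    · exact ⟨j, ⟨hj, (hVmem j hj).1 hjV⟩, u, hu, hju⟩
    · have hmem : g ∈ I ∩ (K * (U : Set G)) := ⟨hgI, j, ⟨hj, hjV⟩, u, hu, hju⟩
      rw [hUdisj] at hmem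
      exact hmem.elim
  -- the open subgroup H = J ⊔ U
  refine ⟨J ⊔ U.toSubgroup, le_sup_left, Subgroup.isOpen_mono le_sup_right U.isOpen, ?_⟩
  have hHset : ((J ⊔ U.toSubgroup : Subgroup G) : Set G) = (J : Set G) * (U : Set G) :=
    Subgroup.mul_normal J U.toSubgroup
  -- key well-definedness lemma
  have key : ∀ (j₁ : G) (h₁ : j₁ ∈ J) (u₁ : G), u₁ ∈ (U : Set G) →
      ∀ (j₂ : G) (h₂ : j₂ ∈ J) (u₂ : G), u₂ ∈ (U : Set G) →
      j₁ * u₁ = j₂ * u₂ → ρJ ⟨j₁, h₁⟩ = ρJ ⟨j₂, h₂⟩ := by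
    intro j₁ h₁ u₁ hu₁ j₂ h₂ u₂ hu₂ heq
    have hjj : j₂⁻¹ * j₁ = u₂ * u₁⁻¹ := by
      have : j₂⁻¹ * (j₁ * u₁) * u₁⁻¹ = j₂⁻¹ * (j₂ * u₂) * u₁⁻¹ := by rw [heq]
      calc j₂⁻¹ * j₁ = j₂⁻¹ * (j₁ * u₁) * u₁⁻¹ := by group
        _ = j₂⁻¹ * (j₂ * u₂) * u₁⁻¹ := this
        _ = u₂ * u₁⁻¹ := by group
    have hmemJ : j₂⁻¹ * j₁ ∈ J := mul_mem (inv_mem h₂) h₁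
    have hmemU : j₂⁻¹ * j₁ ∈ (U : Set G) := by
      rw [hjj]; exact mul_mem hu₂ (inv_mem hu₁)
    have h1 : ρJ ⟨j₂⁻¹ * j₁, hmemJ⟩ = 1 := (hVmem _ hmemJ).1 (hUV hmemU)
    have hsplit : (⟨j₂⁻¹ * j₁, hmemJ⟩ : J) = (⟨j₂, h₂⟩ : J)⁻¹ * ⟨j₁, h₁⟩ := rfl
    rw [hsplit, map_mul, map_inv] at h1
    exact (inv_mul_eq_one.mp h1).symm
  -- decomposition of elements of H
  have hdec : ∀ h : (J ⊔ U.toSubgroup : Subgroup G),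
      ∃ j u : G, ∃ _ : j ∈ J, u ∈ (U : Set G) ∧ (h : G) = j * u := by
    intro h
    have : (h : G) ∈ (J : Set G) * (U : Set G) := by rw [← hHset]; exact h.2
    obtain ⟨j, hj, u, hu, hju⟩ := this
    exact ⟨j, u, hj, hu, hju.symm⟩
  choose jf uf hjf huf heqf using hdec
  set f : (J ⊔ U.toSubgroup : Subgroup G) → Q := fun h => ρJ ⟨jf h, hjf h⟩ with hf
  have hwd : ∀ (h : (J ⊔ U.toSubgroup : Subgroup G)) (j u : G) (hj : j ∈ J),
      u ∈ (U : Set G) → (h : G) = j * u → f h = ρJ ⟨j, hj⟩ := by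
    intro h j u hj hu he
    exact key _ (hjf h) _ (huf h) _ hj _ hu ((heqf h).symm.trans he)
  have hmul : ∀ a b : (J ⊔ U.toSubgroup : Subgroup G), f (a * b) = f a * f b := by
    intro a b
    have hja := hjf a; have hjb := hjf b
    have hua := huf a; have hub := huf b
    have hconj : (jf b)⁻¹ * uf a * jf b ∈ U.toSubgroup := by
      have := U.isNormal'.conj_mem (uf a) hua (jf b)⁻¹
      simpa using this
    have humem : ((jf b)⁻¹ * uf a * jf b) * uf b ∈ (U : Set G) := mul_mem hconj hub
    have heq : ((a * b : (J ⊔ U.toSubgroup : Subgroup G)) : G)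
        = (jf a * jf b) * (((jf b)⁻¹ * uf a * jf b) * uf b) := by
      push_cast
      rw [heqf a, heqf b]
      group
    rw [hwd (a * b) (jf a * jf b) _ (mul_mem hja hjb) humem heq]
    have : (⟨jf a * jf b, mul_mem hja hjb⟩ : J) = ⟨jf a, hja⟩ * ⟨jf b, hjb⟩ := rfl
    rw [this, map_mul]
  refine ⟨MonoidHom.mk' f hmul, ?_, ?_, ?_, ?_⟩
  · -- continuity: f is locally constant
    apply IsLocallyConstant.continuous
    rw [IsLocallyConstant.iff_exists_open]
    intro x
    refine ⟨Subtype.val ⁻¹' ((x : G) • (U : Set G)), (U.isOpen.smul (x : G)).preimage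
      continuous_subtype_val, ?_, ?_⟩
    · rw [Set.mem_preimage, Set.mem_smul_set_iff_inv_smul_mem]
      simpa using one_mem U.toSubgroup
    · intro y hy
      rw [Set.mem_preimage, Set.mem_smul_set_iff_inv_smul_mem] at hy
      have hyx : (y : G) = jf x * (uf x * ((x : G)⁻¹ * (y : G))) := by
        have h1 : (y : G) = (x : G) * ((x : G)⁻¹ * (y : G)) := by group
        rw [heqf x] at h1 ⊢
        rw [h1]; group
      show f y = f x
      rw [hwd y (jf x) _ (hjf x) (mul_mem (huf x) hy) hyx]
  · -- surjectivity
    intro q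
    obtain ⟨x, hx⟩ := hsJ q
    refine ⟨⟨(x : G), Subgroup.mem_sup_left x.2⟩, ?_⟩
    show f ⟨(x : G), Subgroup.mem_sup_left x.2⟩ = q
    rw [hwd _ (x : G) 1 x.2 (one_mem _) (mul_one _).symm]
    simpa using hx
  · -- kills I ∩ H
    intro g hg hgI
    have hgJU : g ∈ (J : Set G) * (U : Set G) := by rw [← hHset]; exact hg
    obtain ⟨n, ⟨hnJ, hn1⟩, u, hu, hnu⟩ := hUI ⟨hgI, hgJU⟩
    show f ⟨g, hg⟩ = 1
    rw [hwd _ n u hnJ hu hnu.symm]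
    exact hn1
  · -- restricts to ρJ on J
    intro g hgJ
    show f ⟨g, _⟩ = ρJ ⟨g, hgJ⟩
    exact hwd _ g 1 hgJ (one_mem _) (mul_one _).symm
end

section
/- Let k be a field of characteristic 0 that is finitely generated as a field extension of ℚ, and let λ₁, λ₂ ∈ k with λ₁, λ₂ ∉ {0, 1}. If the cyclic subgroup of k^× generated by λ₁ equals the cyclic subgroup generated by λ₂, and the cyclic subgroup generated by 1−λ₁ equals the cyclic subgroup generated by 1−λ₂, then either λ₁ = λ₂, or λ₁ is a primitive 6th root of unity (equivalently λ₁² − λ₁ + 1 = 0) and λ₂ = λ₁⁻¹. -/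
open Polynomial

lemma key_six {k : Type*} [Field k] [CharZero k] (ζ : k) (n m : ℕ)
    (hn : 0 < n) (hm : 0 < m) (h1 : ζ ^ n = 1) (h2 : (1 - ζ) ^ m = 1) :
    ζ ^ 2 - ζ + 1 = 0 := by
  have hint : IsIntegral ℚ ζ :=
    ⟨X ^ n - 1, by simpa using monic_X_pow_sub_C (1:ℚ) hn.ne', by simp [h1]⟩
  set p : ℚ[X] := minpoly ℚ ζ with hp
  have hirr : Irreducible p := minpoly.irreducible hint
  have hmon : p.Monic := minpoly.monic hint
  have hdegmap : 0 < (p.map (algebraMap ℚ ℂ)).degree := by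
    rw [degree_map]; exact minpoly.degree_pos hint
  obtain ⟨z, hzr⟩ := Complex.exists_root hdegmap
  have hz0 : aeval z p = 0 := by rw [aeval_def, ← eval_map]; exact hzr
  have hdvd1 : p ∣ X ^ n - 1 := minpoly.dvd ℚ ζ (by simp [h1])
  have hdvd2 : p ∣ (1 - X) ^ m - 1 := minpoly.dvd ℚ ζ (by simp [h2])
  have hz1 : z ^ n = 1 := by
    obtain ⟨q, hq⟩ := hdvd1
    have := congrArg (aeval z) hq
    simp [hz0] at this
    exact sub_eq_zero.mp this
  have hz2 : (1 - z) ^ m = 1 := by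
    obtain ⟨q, hq⟩ := hdvd2
    have := congrArg (aeval z) hq
    simp [hz0] at this
    exact sub_eq_zero.mp this
  -- |z| = 1 and |1 - z| = 1
  have habs : ∀ (w : ℂ) (N : ℕ), 0 < N → w ^ N = 1 → ‖w‖ = 1 := by
    intro w N hN hw
    have h1' : ‖w‖ ^ N = 1 := by
      rw [← norm_pow, hw, norm_one]
    rcases (pow_eq_one_iff_cases.mp h1') with h | h | h
    · omega
    · exact h
    · exfalso; nlinarith [norm_nonneg w, h.1]
  have ha1 : ‖z‖ = 1 := habs z n hn hz1
  have ha2 : ‖(1 - z)‖ = 1 := habs (1 - z) m hm hz2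
  -- translate to conjugation identities
  have e1 : z * (starRingEnd ℂ) z = 1 := by
    rw [Complex.mul_conj]
    norm_cast
    rw [← Complex.sq_norm, ha1]; norm_num
  have e2 : (1 - z) * (starRingEnd ℂ) (1 - z) = 1 := by
    rw [Complex.mul_conj]
    norm_cast
    rw [← Complex.sq_norm, ha2]; norm_num
  set w := (starRingEnd ℂ) z with hw
  have e2' : (1 - z) * (1 - w) = 1 := by
    rw [hw]; simpa [map_sub, map_one] using e2
  have hz6 : z ^ 2 - z + 1 = 0 := by
    linear_combination (z - 1) * e1 - z * e2'
  -- z is a root of X² - X + 1, so minpoly ℚ z divides it, and p = minpoly ℚ z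
  have hpz : p = minpoly ℚ z := minpoly.eq_of_irreducible_of_monic hirr hz0 hmon
  have hdvd3 : p ∣ X ^ 2 - X + 1 := by
    rw [hpz]
    exact minpoly.dvd ℚ z (by simp [hz6])
  obtain ⟨q, hq⟩ := hdvd3
  have h0 : aeval ζ p = 0 := minpoly.aeval ℚ ζ
  have := congrArg (aeval ζ) hq
  rw [map_mul, h0, zero_mul] at this
  simpa using this

/-- If `x` is not a root of unity, only the zero integer power of `x` is 1. -/
lemma not_ru_zpow {k : Type*} [Field k] {x : k}
    (h : ¬ ∃ N : ℕ, 0 < N ∧ x ^ N = 1) {n : ℤ} (hn : x ^ n = 1) : n = 0 := by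
  by_contra h0
  apply h
  rcases lt_or_gt_of_ne h0 with hneg | hpos
  · refine ⟨(-n).toNat, by omega, ?_⟩
    have : x ^ (-n) = 1 := by rw [zpow_neg, hn, inv_one]
    rw [← zpow_natCast, Int.toNat_of_nonneg (by omega)]
    exact this
  · refine ⟨n.toNat, by omega, ?_⟩
    rw [← zpow_natCast, Int.toNat_of_nonneg (by omega)]
    exact hn

lemma ru_zpow {k : Type*} [Field k] {x : k} {N : ℕ} (hx : x ^ N = 1) (a : ℤ) :
    (x ^ a) ^ N = 1 := by
  rw [← zpow_natCast (x ^ a), ← zpow_mul, mul_comm, zpow_mul, zpow_natCast, hx, one_zpow]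

/-- odd integer powers of λ with λ³ = -1 can't be 1 -/
lemma odd_contra {k : Type*} [Field k] [CharZero k] {x : k} (h3 : x ^ (3:ℤ) = -1)
    (s : ℤ) (ht : x ^ (2 * s - 1) = 1) : False := by
  have key : ((-1 : k)) ^ (2 * s - 1) = 1 := by
    rw [← h3, ← zpow_mul, mul_comm, zpow_mul, ht, one_zpow]
  have hodd : ((-1 : k)) ^ (2 * s - 1) = -1 := by
    rw [zpow_sub₀ (by norm_num : (-1:k) ≠ 0), zpow_mul]
    norm_num
  rw [key] at hodd
  have : (2 : k) = 0 := by linear_combination hodd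
  exact two_ne_zero this

/-- Let `k` be a field of characteristic `0`, finitely generated as a field
extension of `ℚ` (equivalently: generated over its prime field by a finite set), and let
`λ₁, λ₂ ∈ k ∖ {0,1}`.  If `⟨λ₁⟩ = ⟨λ₂⟩` and `⟨1−λ₁⟩ = ⟨1−λ₂⟩` in `kˣ`, then either `λ₁ = λ₂`,
or `λ₁` is a primitive 6-th root of unity (equivalently `λ₁² − λ₁ + 1 = 0`) and `λ₂ = λ₁⁻¹`. -/
theorem stmt_4 (k : Type*) [Field k] [CharZero k]
    (hfg : ∃ S : Finset k, Subfield.closure (S : Set k) = ⊤)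
    (lam1 lam2 : k) (h10 : lam1 ≠ 0) (h11 : lam1 ≠ 1) (h20 : lam2 ≠ 0) (h21 : lam2 ≠ 1)
    (hz : {x : k | ∃ n : ℤ, x = lam1 ^ n} = {x : k | ∃ n : ℤ, x = lam2 ^ n})
    (hz' : {x : k | ∃ n : ℤ, x = (1 - lam1) ^ n} = {x : k | ∃ n : ℤ, x = (1 - lam2) ^ n}) :
    lam1 = lam2 ∨ (lam1 ^ 2 - lam1 + 1 = 0 ∧ lam2 = lam1⁻¹) := by
  have h1' : (1:k) - lam1 ≠ 0 := sub_ne_zero.2 fun h => h11 h.symm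
  have h2' : (1:k) - lam2 ≠ 0 := sub_ne_zero.2 fun h => h21 h.symm
  obtain ⟨a, ha⟩ : ∃ a : ℤ, lam2 = lam1 ^ a := by
    have : lam2 ∈ {x : k | ∃ n : ℤ, x = lam2 ^ n} := ⟨1, by simp⟩
    rwa [← hz] at this
  obtain ⟨b, hb⟩ : ∃ b : ℤ, lam1 = lam2 ^ b := by
    have : lam1 ∈ {x : k | ∃ n : ℤ, x = lam1 ^ n} := ⟨1, by simp⟩
    rwa [hz] at this
  obtain ⟨c, hc⟩ : ∃ c : ℤ, 1 - lam2 = (1 - lam1) ^ c := by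
    have : 1 - lam2 ∈ {x : k | ∃ n : ℤ, x = (1-lam2) ^ n} := ⟨1, by simp⟩
    rwa [← hz'] at this
  obtain ⟨d, hd⟩ : ∃ d : ℤ, 1 - lam1 = (1 - lam2) ^ d := by
    have : 1 - lam1 ∈ {x : k | ∃ n : ℤ, x = (1-lam1) ^ n} := ⟨1, by simp⟩
    rwa [hz'] at this
  -- the basic cyclic relations
  have hab : lam1 ^ (a * b - 1) = 1 := by
    rw [zpow_sub₀ h10, zpow_mul, ← ha, ← hb, zpow_one, div_self h10]
  have hcd : (1 - lam1) ^ (c * d - 1) = 1 := by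
    rw [zpow_sub₀ h1', zpow_mul, ← hc, ← hd, zpow_one, div_self h1']
  -- case split on 1 - lam1 being a root of unity
  by_cases hru' : ∃ M : ℕ, 0 < M ∧ (1 - lam1) ^ M = 1
  · obtain ⟨M, hM, hMe⟩ := hru'
    by_cases hru : ∃ N : ℕ, 0 < N ∧ lam1 ^ N = 1
    · -- both roots of unity: lam1 is a primitive 6th root of unity
      obtain ⟨N, hN, hNe⟩ := hru
      have hq : lam1 ^ 2 - lam1 + 1 = 0 := key_six lam1 N M hN hM hNe hMe
      have h3 : lam1 ^ (3:ℤ) = -1 := by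
        have h3n : lam1 ^ (3:ℕ) = -1 := by linear_combination (lam1 + 1) * hq
        rw [show (3:ℤ) = ((3:ℕ):ℤ) by norm_num, zpow_natCast]
        exact h3n
      have h6 : lam1 ^ (6:ℤ) = 1 := by
        have : lam1 ^ (6:ℤ) = (lam1 ^ (3:ℤ)) ^ (2:ℤ) := by rw [← zpow_mul]; norm_num
        rw [this, h3]; norm_num
      -- reduce the exponent a mod 6
      set r := a % 6 with hrdef
      have hr0 : 0 ≤ r := Int.emod_nonneg a (by norm_num)
      have hr6 : r < 6 := Int.emod_lt_of_pos a (by norm_num)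
      have har : lam2 = lam1 ^ r := by
        conv_lhs => rw [ha, ← Int.mul_ediv_add_emod a 6]
        rw [zpow_add₀ h10, zpow_mul, h6, one_zpow, one_mul]
      -- lam1 ^ (a*b - 1) = 1 gives us info
      interval_cases r
      · exfalso; exact h21 (by simpa using har)
      · exact Or.inl (by rw [har, zpow_one])
      · -- lam2 = lam1², then lam1 = lam1^(2b), exponent 2b-1 odd: contradiction
        exfalso
        have : lam1 ^ (2 * b - 1) = 1 := by
          rw [zpow_sub₀ h10, zpow_one, zpow_mul, ← har, ← hb, div_self h10]
        exact odd_contra h3 b this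
      · -- lam2 = lam1³ = -1; then lam1² = 1, contradiction with hq
        exfalso
        have hl2 : lam2 = -1 := by rw [har, h3]
        have hsq' : lam1 ^ (2:ℕ) = 1 := by
          have e : lam1 ^ ((2:ℕ):ℤ) = (((-1:k)) ^ ((2:ℕ):ℤ)) ^ b := by
            rw [hb, hl2, ← zpow_mul, mul_comm b, zpow_mul]
          rw [zpow_natCast, zpow_natCast] at e
          rw [e]; norm_num
        have hl : lam1 = 2 := by linear_combination hsq' - hq
        rw [hl] at hsq'
        norm_num at hsq'
      · -- lam2 = lam1⁴, exponent 4b-1 odd: contradiction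
        exfalso
        have : lam1 ^ (4 * b - 1) = 1 := by
          rw [zpow_sub₀ h10, zpow_one, zpow_mul, ← har, ← hb, div_self h10]
        exact odd_contra h3 (2 * b) (by rwa [show 2 * (2*b) - 1 = 4 * b - 1 by ring])
      · -- lam2 = lam1⁵ = lam1⁻¹
        refine Or.inr ⟨hq, ?_⟩
        rw [har, show (5:ℤ) = 6 - 1 by norm_num, zpow_sub₀ h10, h6, zpow_one]
        exact one_div lam1
    · -- lam1 not a root of unity, but 1 - lam1 is
      have hab1 : a * b = 1 := by
        have := not_ru_zpow hru hab; omega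
      rcases Int.mul_eq_one_iff_eq_one_or_neg_one.mp hab1 with ⟨ha1, _⟩ | ⟨ha1, _⟩
      · exact Or.inl (by rw [ha, ha1, zpow_one])
      · -- lam2 = lam1⁻¹; then lam1 = (lam1-1)/(1-lam2) is a ratio of roots of unity
        exfalso
        have hl2 : lam2 = lam1⁻¹ := by rw [ha, ha1, zpow_neg_one]
        have hMe2 : (1 - lam2) ^ M = 1 := by
          rw [hc, ← zpow_natCast, ← zpow_mul, mul_comm, zpow_mul, zpow_natCast, hMe, one_zpow]
        -- lam1 * (1 - lam2) = lam1 - 1 = -(1 - lam1)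
        have hrel : lam1 * (1 - lam2) = -(1 - lam1) := by
          rw [hl2]; field_simp; ring
        have : lam1 ^ (2*M) * ((1 - lam2) ^ (2*M)) = (1 - lam1) ^ (2*M) := by
          rw [← mul_pow, hrel, pow_mul, pow_mul, neg_sq]
        apply hru
        refine ⟨2 * M, by omega, ?_⟩
        have e1 : (1 - lam2) ^ (2*M) = 1 := by rw [pow_mul', hMe2, one_pow]
        have e2 : (1 - lam1) ^ (2*M) = 1 := by rw [pow_mul', hMe, one_pow]
        rw [e1, e2, mul_one] at this
        exact this
  · -- 1 - lam1 not a root of unity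
    have hcd1 : c * d = 1 := by
      have := not_ru_zpow hru' hcd; omega
    rcases Int.mul_eq_one_iff_eq_one_or_neg_one.mp hcd1 with ⟨hc1, _⟩ | ⟨hc1, _⟩
    · left
      have : 1 - lam2 = 1 - lam1 := by rw [hc, hc1, zpow_one]
      linear_combination this
    · -- (1 - lam2)(1 - lam1) = 1
      have hprod : (1 - lam2) * (1 - lam1) = 1 := by
        rw [hc, hc1, zpow_neg_one]
        exact inv_mul_cancel₀ h1'
      by_cases hru : ∃ N : ℕ, 0 < N ∧ lam1 ^ N = 1
      · -- lam1 root of unity ⇒ lam2 too ⇒ 1 - lam1 root of unity, contradiction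
        exfalso
        obtain ⟨N, hN, hNe⟩ := hru
        have hNe2 : lam2 ^ N = 1 := by
          rw [ha, ← zpow_natCast, ← zpow_mul, mul_comm, zpow_mul, zpow_natCast, hNe, one_zpow]
        have hrel : lam2 * (1 - lam1) = -lam1 := by linear_combination -hprod
        apply hru'
        refine ⟨2 * N, by omega, ?_⟩
        have : lam2 ^ (2*N) * (1 - lam1) ^ (2*N) = lam1 ^ (2*N) := by
          rw [← mul_pow, hrel, pow_mul, pow_mul, neg_sq]
        have e1 : lam2 ^ (2*N) = 1 := by rw [pow_mul', hNe2, one_pow]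
        have e2 : lam1 ^ (2*N) = 1 := by rw [pow_mul', hNe, one_pow]
        rw [e1, e2, one_mul] at this
        exact this
      · -- neither root of unity: a*b = 1
        have hab1 : a * b = 1 := by
          have := not_ru_zpow hru hab; omega
        rcases Int.mul_eq_one_iff_eq_one_or_neg_one.mp hab1 with ⟨ha1, _⟩ | ⟨ha1, _⟩
        · exact Or.inl (by rw [ha, ha1, zpow_one])
        · right
          have hl2 : lam2 = lam1⁻¹ := by rw [ha, ha1, zpow_neg_one]
          refine ⟨?_, hl2⟩
          rw [hl2] at hprod
          field_simp at hprod
          linear_combination -hprod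
end

section
/- Let p be a prime number and let k be a field of characteristic p that is finitely generated as a field extension of 𝔽_p, with a fixed algebraic closure k̄. Let λ₁, λ₂ ∈ k with λ₁, λ₂ ∉ {0, 1}, and assume λ₁ is transcendental over the prime field 𝔽_p. If ⟨λ₁⟩^perf = ⟨λ₂⟩^perf and ⟨1−λ₁⟩^perf = ⟨1−λ₂⟩^perf as subsets of k̄^×, then there exists a unique integer n such that λ₂ = λ₁^{pⁿ}, in the sense that λ₂^{p^b} = λ₁^{p^a} for all (equivalently, some) natural numbers a, b with a − b = n. -/
open Polynomial

lemma aux_pow_ne_one {k : Type*} [Field k] {x : k}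
    (hx : Transcendental (⊥ : Subfield k) x) {N : ℕ} (hN : N ≠ 0) : x ^ N ≠ 1 := by
  intro h
  apply hx
  refine ⟨X ^ N - C 1, ?_, by simp [h]⟩
  exact X_pow_sub_C_ne_zero (Nat.pos_of_ne_zero hN) 1

lemma aux_trans_one_sub {k : Type*} [Field k] {x : k}
    (hx : Transcendental (⊥ : Subfield k) x) : Transcendental (⊥ : Subfield k) (1 - x) := by
  intro h
  apply hx
  have h1 : IsIntegral (⊥ : Subfield k) (1 - x) := isAlgebraic_iff_isIntegral.mp h
  have h2 : IsIntegral (⊥ : Subfield k) ((1 : k) - (1 - x)) := isIntegral_one.sub h1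
  simpa using h2.isAlgebraic

lemma aux_zpow_eq_one {k : Type*} [Field k] {x : k}
    (hnt : ∀ N : ℕ, N ≠ 0 → x ^ N ≠ 1) {e : ℤ} (h : x ^ e = 1) : e = 0 := by
  by_contra he
  rcases Int.natAbs_eq e with h' | h'
  · refine hnt e.natAbs (by omega) ?_
    rw [h', zpow_natCast] at h; exact h
  · refine hnt e.natAbs (by omega) ?_
    rw [h', zpow_neg, zpow_natCast, inv_eq_one] at h; exact h

lemma aux_zpow_inj {k : Type*} [Field k] {x : k} (hx0 : x ≠ 0)
    (hnt : ∀ N : ℕ, N ≠ 0 → x ^ N ≠ 1) {g h : ℤ} (hgh : x ^ g = x ^ h) : g = h := by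
  have h1 : x ^ (g - h) = 1 := by
    rw [zpow_sub₀ hx0, hgh, div_self (zpow_ne_zero _ hx0)]
  have := aux_zpow_eq_one hnt h1; omega

lemma aux_frob_inj {p : ℕ} (hp : p.Prime) {k : Type*} [Field k] [CharP k p] (c : ℕ) {x y : k}
    (h : x ^ p ^ c = y ^ p ^ c) : x = y := by
  haveI := Fact.mk hp
  induction c with
  | zero => simpa using h
  | succ c ih =>
    apply ih
    have h' : (x ^ p ^ c - y ^ p ^ c) ^ p = 0 := by
      rw [sub_pow_char, ← pow_mul, ← pow_mul, ← pow_succ, h, sub_self]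
    exact sub_eq_zero.mp ((pow_eq_zero_iff hp.ne_zero).mp h')

lemma aux_exp {p : ℕ} (hp : p.Prime) {k : Type*} [Field k] {x y : k}
    (hx0 : x ≠ 0) (hy0 : y ≠ 0)
    (hxt : ∀ N : ℕ, N ≠ 0 → x ^ N ≠ 1)
    {m s : ℕ} {n t : ℤ} (e : y ^ p ^ m = x ^ n) (f : x ^ p ^ s = y ^ t) :
    ∃ j : ℕ, n = (p : ℤ) ^ j ∨ n = -((p : ℤ) ^ j) := by
  have hyt : ∀ N : ℕ, N ≠ 0 → y ^ N ≠ 1 := by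
    intro N hN hyN
    refine hxt (p ^ s * N) (Nat.mul_ne_zero (pow_ne_zero _ hp.ne_zero) hN) ?_
    calc x ^ (p ^ s * N) = (x ^ p ^ s) ^ N := pow_mul x _ N
      _ = (y ^ t) ^ ((N : ℕ) : ℤ) := by rw [f, zpow_natCast]
      _ = (y ^ ((N : ℕ) : ℤ)) ^ t := by rw [← zpow_mul, mul_comm, zpow_mul]
      _ = (y ^ N) ^ t := by rw [zpow_natCast]
      _ = 1 := by rw [hyN, one_zpow]
  have key : ((p : ℤ) ^ (m + s)) = t * n := by
    apply aux_zpow_inj hy0 hyt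
    calc y ^ ((p : ℤ) ^ (m + s)) = y ^ (((p ^ (m + s) : ℕ) : ℤ)) := by push_cast; ring_nf
      _ = y ^ (p ^ (m + s)) := zpow_natCast _ _
      _ = (y ^ p ^ m) ^ p ^ s := by rw [← pow_mul, pow_add]
      _ = (x ^ n) ^ ((p ^ s : ℕ) : ℤ) := by rw [e, zpow_natCast]
      _ = (x ^ ((p ^ s : ℕ) : ℤ)) ^ n := by rw [← zpow_mul, mul_comm, zpow_mul]
      _ = (y ^ t) ^ n := by rw [zpow_natCast, f]
      _ = y ^ (t * n) := by rw [← zpow_mul]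
  have hdvd : n ∣ (p : ℤ) ^ (m + s) := Dvd.intro_left t key.symm
  have hdvd' : n.natAbs ∣ p ^ (m + s) := by
    have h2 := Int.natAbs_dvd_natAbs.mpr hdvd
    rwa [Int.natAbs_pow, Int.natAbs_natCast] at h2
  obtain ⟨j, _, hj⟩ := (Nat.dvd_prime_pow hp).mp hdvd'
  refine ⟨j, ?_⟩
  rcases Int.natAbs_eq n with h' | h'
  · left; rw [h', hj]; push_cast; ring
  · right; rw [h', hj]; push_cast; ring


/-- Let `p` be a prime, `k` a field of characteristic `p`, finitely generated as
a field extension of `𝔽_p` (equivalently: generated over its prime field by a finite set), with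
algebraic closure `kbar`, and let `λ₁, λ₂ ∈ k ∖ {0,1}` with `λ₁` transcendental over the prime
field.  If `⟨λ₁⟩^perf = ⟨λ₂⟩^perf` and `⟨1−λ₁⟩^perf = ⟨1−λ₂⟩^perf` in `kbar`, then there is a
unique `n : ℤ` with `λ₂ = λ₁^{pⁿ}`, i.e. `λ₂^{p^b} = λ₁^{p^a}` whenever `a - b = n`. -/
theorem stmt_5 (p : ℕ) (hp : p.Prime) (k kbar : Type*) [Field k] [CharP k p]
    [Field kbar] [Algebra k kbar] [IsAlgClosure k kbar]
    (hfg : ∃ S : Finset k, Subfield.closure (S : Set k) = ⊤)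
    (lam1 lam2 : k) (h10 : lam1 ≠ 0) (h11 : lam1 ≠ 1) (h20 : lam2 ≠ 0) (h21 : lam2 ≠ 1)
    (htr : Transcendental (⊥ : Subfield k) lam1)
    (h1 : {y : kbar | ∃ m : ℕ, ∃ n : ℤ, y ^ p ^ m = algebraMap k kbar (lam1 ^ n)} =
          {y : kbar | ∃ m : ℕ, ∃ n : ℤ, y ^ p ^ m = algebraMap k kbar (lam2 ^ n)})
    (h2 : {y : kbar | ∃ m : ℕ, ∃ n : ℤ, y ^ p ^ m = algebraMap k kbar ((1 - lam1) ^ n)} =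
          {y : kbar | ∃ m : ℕ, ∃ n : ℤ, y ^ p ^ m = algebraMap k kbar ((1 - lam2) ^ n)}) :
    ∃! n : ℤ, ∀ a b : ℕ, (a : ℤ) - (b : ℤ) = n → lam2 ^ p ^ b = lam1 ^ p ^ a := by
  haveI := Fact.mk hp
  have hinj : Function.Injective (algebraMap k kbar) := (algebraMap k kbar).injective
  have h1' : (1 : k) - lam1 ≠ 0 := sub_ne_zero.mpr (Ne.symm h11)
  have h2' : (1 : k) - lam2 ≠ 0 := sub_ne_zero.mpr (Ne.symm h21)
  -- extract the four basic relations
  have mem1 : (algebraMap k kbar lam2) ∈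
      {y : kbar | ∃ m : ℕ, ∃ n : ℤ, y ^ p ^ m = algebraMap k kbar (lam1 ^ n)} := by
    rw [h1]; exact ⟨0, 1, by simp⟩
  obtain ⟨m1, n1, e1'⟩ := mem1
  have e1 : lam2 ^ p ^ m1 = lam1 ^ n1 := by
    apply hinj; rw [map_pow]; exact e1'
  have mem2 : (algebraMap k kbar lam1) ∈
      {y : kbar | ∃ m : ℕ, ∃ n : ℤ, y ^ p ^ m = algebraMap k kbar (lam2 ^ n)} := by
    rw [← h1]; exact ⟨0, 1, by simp⟩
  obtain ⟨s1, t1, f1'⟩ := mem2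
  have f1 : lam1 ^ p ^ s1 = lam2 ^ t1 := by
    apply hinj; rw [map_pow]; exact f1'
  have mem3 : (algebraMap k kbar (1 - lam2)) ∈
      {y : kbar | ∃ m : ℕ, ∃ n : ℤ, y ^ p ^ m = algebraMap k kbar ((1 - lam1) ^ n)} := by
    rw [h2]; exact ⟨0, 1, by simp⟩
  obtain ⟨m2, n2, e2'⟩ := mem3
  have e2 : (1 - lam2) ^ p ^ m2 = (1 - lam1) ^ n2 := by
    apply hinj; rw [map_pow]; exact e2'
  have mem4 : (algebraMap k kbar (1 - lam1)) ∈
      {y : kbar | ∃ m : ℕ, ∃ n : ℤ, y ^ p ^ m = algebraMap k kbar ((1 - lam2) ^ n)} := by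
    rw [← h2]; exact ⟨0, 1, by simp⟩
  obtain ⟨s2, t2, f2'⟩ := mem4
  have f2 : (1 - lam1) ^ p ^ s2 = (1 - lam2) ^ t2 := by
    apply hinj; rw [map_pow]; exact f2'
  -- nontorsion facts
  have hxt1 : ∀ N : ℕ, N ≠ 0 → lam1 ^ N ≠ 1 := fun N hN => aux_pow_ne_one htr hN
  have htr' := aux_trans_one_sub htr
  have hxt2 : ∀ N : ℕ, N ≠ 0 → ((1 : k) - lam1) ^ N ≠ 1 := fun N hN => aux_pow_ne_one htr' hN
  obtain ⟨j1, hj1⟩ := aux_exp hp h10 h20 hxt1 e1 f1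
  rcases hj1 with hj1 | hj1
  · -- positive sign : the answer is j1 - m1
    have e1n : lam2 ^ p ^ m1 = lam1 ^ p ^ j1 := by
      rw [e1, hj1, show ((p : ℤ) ^ j1) = ((p ^ j1 : ℕ) : ℤ) by push_cast; ring, zpow_natCast]
    have prop : ∀ a b : ℕ, (a : ℤ) - (b : ℤ) = (j1 : ℤ) - m1 → lam2 ^ p ^ b = lam1 ^ p ^ a := by
      intro a b hab
      have hab' : j1 + b = a + m1 := by omega
      apply aux_frob_inj hp m1
      calc (lam2 ^ p ^ b) ^ p ^ m1 = (lam2 ^ p ^ m1) ^ p ^ b := by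
            rw [← pow_mul, ← pow_mul, mul_comm]
        _ = (lam1 ^ p ^ j1) ^ p ^ b := by rw [e1n]
        _ = lam1 ^ p ^ (j1 + b) := by rw [← pow_mul, ← pow_add]
        _ = lam1 ^ p ^ (a + m1) := by rw [hab']
        _ = (lam1 ^ p ^ a) ^ p ^ m1 := by rw [← pow_mul, ← pow_add]
    refine ⟨(j1 : ℤ) - m1, prop, ?_⟩
    intro n' hn'
    obtain ⟨a, b, hab⟩ : ∃ a b : ℕ, (a : ℤ) - b = (j1 : ℤ) - m1 :=
      ⟨((j1 : ℤ) - m1 + ((j1 : ℤ) - m1).natAbs).toNat, ((j1 : ℤ) - m1).natAbs, by omega⟩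
    obtain ⟨a', b', hab'⟩ : ∃ a b : ℕ, (a : ℤ) - b = n' :=
      ⟨(n' + n'.natAbs).toNat, n'.natAbs, by omega⟩
    have E1 := prop a b hab
    have E2 := hn' a' b' hab'
    have Epow : lam1 ^ (p ^ (a + b')) = lam1 ^ (p ^ (a' + b)) := by
      calc lam1 ^ p ^ (a + b') = (lam1 ^ p ^ a) ^ p ^ b' := by rw [← pow_mul, ← pow_add]
        _ = (lam2 ^ p ^ b) ^ p ^ b' := by rw [E1]
        _ = (lam2 ^ p ^ b') ^ p ^ b := by rw [← pow_mul, ← pow_mul, mul_comm]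
        _ = (lam1 ^ p ^ a') ^ p ^ b := by rw [E2]
        _ = lam1 ^ p ^ (a' + b) := by rw [← pow_mul, ← pow_add]
    have hexp : ((p ^ (a + b') : ℕ) : ℤ) = ((p ^ (a' + b) : ℕ) : ℤ) := by
      apply aux_zpow_inj h10 hxt1
      rw [zpow_natCast, zpow_natCast]; exact Epow
    have hexp' : p ^ (a + b') = p ^ (a' + b) := by exact_mod_cast hexp
    have := Nat.pow_right_injective hp.two_le hexp'
    omega
  · -- negative sign : contradiction
    exfalso
    obtain ⟨j2, hj2⟩ := aux_exp hp h1' h2' hxt2 e2 f2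
    set A : ℕ := p ^ (j1 + m2) with hA
    set B : ℕ := p ^ (j2 + m1) with hB
    have hA0 : A ≠ 0 := pow_ne_zero _ hp.ne_zero
    have hB0 : B ≠ 0 := pow_ne_zero _ hp.ne_zero
    have hAne : lam1 ^ A ≠ 0 := pow_ne_zero _ h10
    have hBne : ((1 : k) - lam1) ^ B ≠ 0 := pow_ne_zero _ h1'
    have E1 : lam2 ^ p ^ (m1 + m2) = (lam1 ^ A)⁻¹ := by
      calc lam2 ^ p ^ (m1 + m2) = (lam2 ^ p ^ m1) ^ p ^ m2 := by rw [← pow_mul, ← pow_add]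
        _ = (lam1 ^ (-((p ^ j1 : ℕ) : ℤ))) ^ p ^ m2 := by
            rw [e1, hj1, show ((p : ℤ) ^ j1) = ((p ^ j1 : ℕ) : ℤ) by push_cast; ring]
        _ = ((lam1 ^ (p ^ j1 : ℕ))⁻¹) ^ p ^ m2 := by rw [zpow_neg, zpow_natCast]
        _ = (lam1 ^ A)⁻¹ := by rw [inv_pow, ← pow_mul, ← pow_add]
    have F : ((1 : k) - lam2) ^ p ^ (m1 + m2) = 1 - lam2 ^ p ^ (m1 + m2) := by
      rw [sub_pow_char_pow, one_pow]
    rcases hj2 with hj2 | hj2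
    · -- (1-lam2)^{p^N} = (1-lam1)^B
      have E2 : ((1 : k) - lam2) ^ p ^ (m1 + m2) = ((1 : k) - lam1) ^ B := by
        calc ((1 : k) - lam2) ^ p ^ (m1 + m2) = (((1 : k) - lam2) ^ p ^ m2) ^ p ^ m1 := by
              rw [← pow_mul, ← pow_add, Nat.add_comm]
          _ = (((1 : k) - lam1) ^ ((p ^ j2 : ℕ) : ℤ)) ^ p ^ m1 := by
              rw [e2, hj2, show ((p : ℤ) ^ j2) = ((p ^ j2 : ℕ) : ℤ) by push_cast; ring]
          _ = (((1 : k) - lam1) ^ (p ^ j2 : ℕ)) ^ p ^ m1 := by rw [zpow_natCast]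
          _ = ((1 : k) - lam1) ^ B := by rw [← pow_mul, ← pow_add]
      have hEq : 1 - (lam1 ^ A)⁻¹ = ((1 : k) - lam1) ^ B := by
        rw [← E1, ← F]; exact E2
      have key : lam1 ^ A * ((1 : k) - lam1) ^ B = lam1 ^ A - 1 := by
        calc lam1 ^ A * ((1 : k) - lam1) ^ B = lam1 ^ A * (1 - (lam1 ^ A)⁻¹) := by rw [hEq]
          _ = lam1 ^ A - 1 := by rw [mul_sub, mul_one, mul_inv_cancel₀ hAne]
      apply htr
      refine ⟨X ^ A * (1 - X) ^ B - X ^ A + 1, ?_, ?_⟩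
      · intro h0
        have hc := congrArg (Polynomial.eval 0) h0
        simp [zero_pow hA0] at hc
      · simp only [map_add, map_sub, map_mul, map_pow, aeval_X, map_one]
        rw [key]; ring
    · -- (1-lam2)^{p^N} = ((1-lam1)^B)⁻¹
      have E2 : ((1 : k) - lam2) ^ p ^ (m1 + m2) = (((1 : k) - lam1) ^ B)⁻¹ := by
        calc ((1 : k) - lam2) ^ p ^ (m1 + m2) = (((1 : k) - lam2) ^ p ^ m2) ^ p ^ m1 := by
              rw [← pow_mul, ← pow_add, Nat.add_comm]
          _ = (((1 : k) - lam1) ^ (-((p ^ j2 : ℕ) : ℤ))) ^ p ^ m1 := by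
              rw [e2, hj2, show ((p : ℤ) ^ j2) = ((p ^ j2 : ℕ) : ℤ) by push_cast; ring]
          _ = ((((1 : k) - lam1) ^ (p ^ j2 : ℕ))⁻¹) ^ p ^ m1 := by rw [zpow_neg, zpow_natCast]
          _ = (((1 : k) - lam1) ^ B)⁻¹ := by rw [inv_pow, ← pow_mul, ← pow_add]
      have hEq : 1 - (lam1 ^ A)⁻¹ = (((1 : k) - lam1) ^ B)⁻¹ := by
        rw [← E1, ← F]; exact E2
      have key : (lam1 ^ A - 1) * ((1 : k) - lam1) ^ B = lam1 ^ A := by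
        calc (lam1 ^ A - 1) * ((1 : k) - lam1) ^ B
            = (lam1 ^ A * (1 - (lam1 ^ A)⁻¹)) * ((1 : k) - lam1) ^ B := by
              rw [mul_sub, mul_one, mul_inv_cancel₀ hAne]
          _ = (lam1 ^ A * (((1 : k) - lam1) ^ B)⁻¹) * ((1 : k) - lam1) ^ B := by rw [hEq]
          _ = lam1 ^ A := by rw [mul_assoc, inv_mul_cancel₀ hBne, mul_one]
      apply htr
      refine ⟨(X ^ A - 1) * (1 - X) ^ B - X ^ A, ?_, ?_⟩
      · intro h0
        have hc := congrArg (Polynomial.eval 0) h0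
        simp [zero_pow hA0] at hc
      · simp only [map_sub, map_mul, map_pow, aeval_X, map_one]
        rw [key]; ring
end

section
/- Let λ ∈ ℚ with λ ∉ {0, 1}. Then J(λ) contains an element of 𝓔 if and only if λ ∈ {−1, 2, 1/2}; moreover, in that case J(λ) = {−1, 2, 1/2}. -/
/-- `J(λ) = {λ, 1/λ, 1−λ, 1/(1−λ), λ/(λ−1), (λ−1)/λ}`. -/
def Jset (k : Type*) [Field k] (lam : k) : Set k :=
  {lam, lam⁻¹, 1 - lam, (1 - lam)⁻¹, lam / (lam - 1), (lam - 1) / lam}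

/-- `e ∈ 𝓔` : both `e` and `e⁻¹` are integral over `ℤ`, and `1 - e` divides `2` in the ring of
all algebraic integers (i.e. `2/(1-e)` is integral over `ℤ`). -/
def memE (e : ℂ) : Prop :=
  IsIntegral ℤ e ∧ IsIntegral ℤ e⁻¹ ∧ ∃ c : ℂ, IsIntegral ℤ c ∧ (1 - e) * c = 2

/-- A nonzero rational number in `𝓔` must equal `-1`. -/
lemma ratE (μ : ℚ) (hμ : μ ≠ 0) (h : memE (μ : ℂ)) : μ = -1 := by
  obtain ⟨hi, hi', _, _, hc⟩ := h
  have h1 : IsIntegral ℤ μ := by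
    rw [show ((μ:ℂ)) = algebraMap ℚ ℂ μ from rfl,
      isIntegral_algebraMap_iff (algebraMap ℚ ℂ).injective] at hi
    exact hi
  have h2 : IsIntegral ℤ μ⁻¹ := by
    rw [show ((μ:ℂ)⁻¹) = algebraMap ℚ ℂ μ⁻¹ by norm_cast,
      isIntegral_algebraMap_iff (algebraMap ℚ ℂ).injective] at hi'
    exact hi'
  obtain ⟨n, hn⟩ := IsIntegrallyClosed.isIntegral_iff.mp h1
  obtain ⟨m, hm⟩ := IsIntegrallyClosed.isIntegral_iff.mp h2
  have hnm : (n : ℚ) * m = 1 := by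
    rw [show ((n:ℚ)) = μ from hn, show ((m:ℚ)) = μ⁻¹ from hm]
    field_simp
  have : n * m = 1 := by exact_mod_cast hnm
  have hu : n = 1 ∨ n = -1 := Int.isUnit_iff.mp (IsUnit.of_mul_eq_one _ this)
  rcases hu with h | h
  · exfalso
    have : μ = 1 := by rw [← hn, h]; norm_num
    rw [this] at hc
    norm_num at hc
  · rw [← hn, h]; norm_num

lemma negOneE : memE ((-1 : ℚ) : ℂ) := by
  have h : ((-1 : ℚ) : ℂ) = -1 := by norm_num
  rw [memE, h]
  refine ⟨isIntegral_one.neg, ?_, 1, isIntegral_one, by norm_num⟩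
  rw [show ((-1 : ℂ))⁻¹ = -1 by norm_num]
  exact isIntegral_one.neg

/-- For `λ ∈ ℚ ∖ {0,1}`, `J(λ)` meets `𝓔` iff `λ ∈ {−1, 2, 1/2}`, and in that
case `J(λ) = {−1, 2, 1/2}`. -/
theorem stmt_7 (lam : ℚ) (h0 : lam ≠ 0) (h1 : lam ≠ 1) :
    ((∃ μ ∈ Jset ℚ lam, memE (μ : ℂ)) ↔ lam ∈ ({-1, 2, 1/2} : Set ℚ)) ∧
    (lam ∈ ({-1, 2, 1/2} : Set ℚ) → Jset ℚ lam = {-1, 2, 1/2}) := by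
  have hs : lam - 1 ≠ 0 := sub_ne_zero.mpr h1
  have hs' : (1 : ℚ) - lam ≠ 0 := sub_ne_zero.mpr (Ne.symm h1)
  constructor
  · constructor
    · rintro ⟨μ, hμJ, hE⟩
      simp only [Jset, Set.mem_insert_iff, Set.mem_singleton_iff] at hμJ
      simp only [Set.mem_insert_iff, Set.mem_singleton_iff]
      rcases hμJ with h | h | h | h | h | h <;> subst h
      · left; exact ratE _ h0 hE
      · have := ratE _ (inv_ne_zero h0) hE
        left
        field_simp at this
        linarith
      · right; left
        have := ratE _ hs' hE
        linarith
      · right; left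
        have := ratE _ (inv_ne_zero hs') hE
        field_simp at this
        linarith
      · right; right
        have := ratE _ (div_ne_zero h0 hs) hE
        field_simp at this
        linarith
      · right; right
        have := ratE _ (div_ne_zero hs h0) hE
        field_simp at this
        linarith
    · intro h
      refine ⟨-1, ?_, by exact_mod_cast negOneE⟩
      simp only [Set.mem_insert_iff, Set.mem_singleton_iff] at h
      rcases h with h | h | h <;> subst h <;>
        simp only [Jset, Set.mem_insert_iff, Set.mem_singleton_iff] <;> norm_num
  · intro h
    simp only [Set.mem_insert_iff, Set.mem_singleton_iff] at h
    rcases h with h | h | h <;> subst h <;>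
      · ext x
        simp only [Jset, Set.mem_insert_iff, Set.mem_singleton_iff]
        norm_num
        tauto
end

section
/- Let λ be a complex number with λ ∉ {0, 1}, and suppose that (1 − λ)(1 + λⁿ) = 2 for some integer n. Then λ belongs to 𝓔; that is, λ and λ⁻¹ are integral over ℤ and 2/(1 − λ) is integral over ℤ. -/
open Polynomial in
lemma aux_integral (k : ℕ) (hk : 1 ≤ k) (a b c : ℤ) (x : ℂ)
    (hx : x ^ (k + 1) + a * x ^ k + b * x + c = 0) : IsIntegral ℤ x := by
  refine ⟨X ^ (k + 1) + (C a * X ^ k + C b * X + C c), ?_, ?_⟩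
  · apply monic_X_pow_add
    have hdeg : (C a * X ^ k + C b * X + C c).degree ≤ (k : WithBot ℕ) := by
      compute_degree
      exact sup_le le_rfl (by exact_mod_cast hk)
    exact lt_of_le_of_lt hdeg (by exact_mod_cast Nat.lt_succ_self k)
  · simp only [eval₂_add, eval₂_mul, eval₂_pow, eval₂_X, eval₂_C]
    simp only [eq_intCast]
    linear_combination hx

/-- If `λ ∈ ℂ ∖ {0,1}` satisfies `(1 − λ)(1 + λⁿ) = 2` for some `n : ℤ`, then
`λ ∈ 𝓔`: both `λ` and `λ⁻¹` are integral over `ℤ`, and `2/(1 − λ)` is integral over `ℤ`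
(i.e. `1 − λ` divides `2` in the ring of all algebraic integers). -/
theorem stmt_12 (lam : ℂ) (h0 : lam ≠ 0) (h1 : lam ≠ 1)
    (h : ∃ n : ℤ, (1 - lam) * (1 + lam ^ n) = 2) :
    IsIntegral ℤ lam ∧ IsIntegral ℤ lam⁻¹ ∧ ∃ c : ℂ, IsIntegral ℤ c ∧ (1 - lam) * c = 2 := by
  obtain ⟨n, hn⟩ := h
  rcases lt_trichotomy n 0 with hneg | hzero | hpos
  · -- n < 0 : set m = (-n).toNat ≥ 1
    set m : ℕ := (-n).toNat with hm
    have hmn : n = -(m : ℤ) := by omega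
    have hz : lam ^ n = (lam ^ m)⁻¹ := by
      rw [hmn, zpow_neg, zpow_natCast]
    have hm1 : 1 ≤ m := by omega
    have hpm : lam ^ m ≠ 0 := pow_ne_zero _ h0
    have key : lam ^ (m + 1) + lam ^ m + lam - 1 = 0 := by
      have h2 : (1 - lam) * (lam ^ m + 1) = 2 * lam ^ m := by
        field_simp [hz] at hn
        have hmn1 : lam ^ m * lam ^ n = 1 := by rw [hz, mul_inv_cancel₀ hpm]
        linear_combination lam ^ m * hn - (1 - lam) * hmn1
      linear_combination -h2
    have hA : IsIntegral ℤ lam := by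
      apply aux_integral m hm1 1 1 (-1)
      push_cast; linear_combination key
    have hB : IsIntegral ℤ lam⁻¹ := by
      apply aux_integral m hm1 (-1) (-1) (-1)
      push_cast
      have : lam⁻¹ ^ (m + 1) - lam⁻¹ ^ m - lam⁻¹ - 1 = 0 := by
        have hi : lam⁻¹ ^ (m + 1) * lam ^ (m + 1) = 1 := by rw [← mul_pow, inv_mul_cancel₀ h0, one_pow]
        have hi' : lam⁻¹ ^ m * lam ^ m = 1 := by rw [← mul_pow, inv_mul_cancel₀ h0, one_pow]
        have hi0 : lam⁻¹ * lam = 1 := inv_mul_cancel₀ h0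
        refine mul_right_cancel₀ (pow_ne_zero (m + 1) h0) ?_
        linear_combination hi - lam * hi' - lam ^ m * hi0 - key
      linear_combination this
    refine ⟨hA, hB, 1 + lam ^ n, ?_, hn⟩
    rw [hz, ← inv_pow]
    exact isIntegral_one.add (hB.pow m)
  · exfalso
    rw [hzero, zpow_zero] at hn
    exact h0 (by linear_combination (-1/2 : ℂ) * hn)
  · -- n > 0
    set k : ℕ := n.toNat with hk
    have hkn : n = (k : ℤ) := by omega
    have hz : lam ^ n = lam ^ k := by rw [hkn, zpow_natCast]
    have hk1 : 1 ≤ k := by omega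
    have key : lam ^ (k + 1) - lam ^ k + lam + 1 = 0 := by
      rw [hz] at hn
      linear_combination -hn
    have hA : IsIntegral ℤ lam := by
      apply aux_integral k hk1 (-1) 1 1
      push_cast; linear_combination key
    have hB : IsIntegral ℤ lam⁻¹ := by
      apply aux_integral k hk1 1 (-1) 1
      push_cast
      have : lam⁻¹ ^ (k + 1) + lam⁻¹ ^ k - lam⁻¹ + 1 = 0 := by
        have hi : lam⁻¹ ^ (k + 1) * lam ^ (k + 1) = 1 := by rw [← mul_pow, inv_mul_cancel₀ h0, one_pow]
        have hi' : lam⁻¹ ^ k * lam ^ k = 1 := by rw [← mul_pow, inv_mul_cancel₀ h0, one_pow]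
        have hi0 : lam⁻¹ * lam = 1 := inv_mul_cancel₀ h0
        refine mul_right_cancel₀ (pow_ne_zero (k + 1) h0) ?_
        linear_combination hi + lam * hi' - lam ^ k * hi0 + key
      linear_combination this
    refine ⟨hA, hB, 1 + lam ^ n, ?_, hn⟩
    rw [hz]
    exact isIntegral_one.add (hA.pow k)
end

section
/- Let A be a finitely generated abelian group, B a subgroup of A, and a ∈ A. If for every prime number ℓ and every natural number n there exist b ∈ B and c ∈ A with a = b + ℓⁿ · c, then a ∈ B. -/
/-- Let `A` be a finitely generated abelian group, `B ≤ A` and `a ∈ A`.  If for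
every prime `ℓ` and every `n : ℕ` one can write `a = b + ℓⁿ • c` with `b ∈ B`, `c ∈ A`, then
`a ∈ B`. -/
theorem stmt_13 (A : Type*) [AddCommGroup A] (hA : AddGroup.FG A)
    (B : AddSubgroup A) (a : A)
    (h : ∀ ℓ n : ℕ, ℓ.Prime → ∃ b ∈ B, ∃ c : A, a = b + (ℓ ^ n) • c) :
    a ∈ B := by
  haveI := hA
  set G := A ⧸ B with hG
  let π : A →+ G := QuotientAddGroup.mk' B
  suffices hx : π a = 0 by
    rwa [QuotientAddGroup.mk'_apply, QuotientAddGroup.eq_zero_iff] at hx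
  have hdiv : ∀ ℓ n : ℕ, ℓ.Prime → ∃ y : G, π a = (ℓ ^ n) • y := by
    intro ℓ n hℓ
    obtain ⟨b, hb, c, hc⟩ := h ℓ n hℓ
    refine ⟨π c, ?_⟩
    have hb0 : π b = 0 := (QuotientAddGroup.eq_zero_iff b).mpr hb
    rw [hc, map_add, map_nsmul, hb0, zero_add]
  obtain ⟨n, ι, fι, p, hp, e, ⟨f⟩⟩ := AddCommGroup.equiv_free_prod_directSum_zmod G
  have hz : f (π a) = 0 := by
    refine Prod.ext ?_ ?_
    · -- free part: each coordinate divisible by every power of 2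
      ext j
      simp only [Prod.fst_zero, Finsupp.coe_zero, Pi.zero_apply]
      by_contra h0
      set m := ((f (π a)).1 j).natAbs with hm
      obtain ⟨y, hy⟩ := hdiv 2 m Nat.prime_two
      have hdd : ((2 : ℤ) ^ m) ∣ (f (π a)).1 j := by
        refine ⟨(f y).1 j, ?_⟩
        rw [hy, map_nsmul]
        have : ((2 ^ m) • f y).1 j = (2 ^ m) • ((f y).1 j) := by
          rw [Prod.smul_fst, Finsupp.smul_apply]
        rw [this, nsmul_eq_mul]
        push_cast
        ring
      have h1 : (2 : ℤ) ^ m ≤ |(f (π a)).1 j| :=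
        Int.le_of_dvd (abs_pos.mpr h0) ((dvd_abs _ _).mpr hdd)
      have h2 : |(f (π a)).1 j| = (m : ℤ) := Int.abs_eq_natAbs _
      have h3 : (m : ℤ) < 2 ^ m := by exact_mod_cast (Nat.lt_two_pow_self (n := m))
      rw [h2] at h1
      have : ((2 : ℤ) ^ m) = ((2 ^ m : ℕ) : ℤ) := by push_cast; ring
      omega
    · -- torsion part: coordinate i killed by p i ^ e i
      refine DFinsupp.ext fun i => ?_
      simp only [Prod.snd_zero, DFinsupp.zero_apply]
      obtain ⟨y, hy⟩ := hdiv (p i) (e i) (hp i)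
      have : (f (π a)).2 i = ((p i ^ e i) • f y).2 i := by rw [← map_nsmul, ← hy]
      rw [this, Prod.smul_snd, DFinsupp.smul_apply, nsmul_eq_mul,
        ZMod.natCast_self, zero_mul]
  have : π a = f.symm 0 := by rw [← hz, AddEquiv.symm_apply_apply]
  rwa [map_zero] at this
end

section
/- Let p be a prime number, A a finitely generated abelian group, B a subgroup of A, and a ∈ A. If for every prime number ℓ ≠ p and every natural number n there exist b ∈ B and c ∈ A with a = b + ℓⁿ · c, then there exists a natural number m such that p^m · a ∈ B. -/
/-- Let `p` be a prime, `A` a finitely generated abelian group, `B ≤ A` and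
`a ∈ A`.  If for every prime `ℓ ≠ p` and every `n : ℕ` one can write `a = b + ℓⁿ • c` with
`b ∈ B`, `c ∈ A`, then `p^m • a ∈ B` for some `m : ℕ`. -/
theorem stmt_14 (p : ℕ) (hp : p.Prime) (A : Type*) [AddCommGroup A] (hA : AddGroup.FG A)
    (B : AddSubgroup A) (a : A)
    (h : ∀ ℓ n : ℕ, ℓ.Prime → ℓ ≠ p → ∃ b ∈ B, ∃ c : A, a = b + (ℓ ^ n) • c) :
    ∃ m : ℕ, (p ^ m) • a ∈ B := by
  classical
  let Q := A ⧸ B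
  haveI : AddGroup.FG Q := by
    haveI := hA
    infer_instance
  let abar : Q := QuotientAddGroup.mk a
  have hdiv : ∀ ℓ n : ℕ, ℓ.Prime → ℓ ≠ p → ∃ c : Q, abar = (ℓ ^ n) • c := by
    intro ℓ n hℓ hne
    obtain ⟨b, hb, c, hc⟩ := h ℓ n hℓ hne
    refine ⟨QuotientAddGroup.mk c, ?_⟩
    have hb0 : (QuotientAddGroup.mk b : Q) = 0 := (QuotientAddGroup.eq_zero_iff b).2 hb
    have : abar = QuotientAddGroup.mk (b + (ℓ ^ n) • c) := by rw [← hc]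
    rw [this]
    simp [QuotientAddGroup.mk_add, hb0]
  suffices hs : ∃ m : ℕ, (p ^ m) • abar = 0 by
    obtain ⟨m, hm⟩ := hs
    refine ⟨m, ?_⟩
    rw [← QuotientAddGroup.eq_zero_iff]
    simpa using hm
  obtain ⟨n, ι, fι, q, hq, e, ⟨f⟩⟩ := AddCommGroup.equiv_free_prod_directSum_zmod Q
  obtain ⟨ℓ₀, hℓ₀big, hℓ₀⟩ := Nat.exists_infinite_primes (p + 1)
  have hℓ₀ne : ℓ₀ ≠ p := by omega
  -- free part is zero
  have hfree : (f abar).1 = 0 := by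
    ext j
    set N := ((f abar).1 j).natAbs + 1 with hN
    obtain ⟨k, hk⟩ := hdiv ℓ₀ N hℓ₀ hℓ₀ne
    have hx : (f abar).1 j = (ℓ₀ : ℤ) ^ N * (f k).1 j := by
      conv_lhs => rw [hk]
      rw [map_nsmul]
      simp [nsmul_eq_mul]
    have hdvd : ((ℓ₀ : ℤ) ^ N) ∣ (f abar).1 j := ⟨(f k).1 j, hx⟩
    refine Int.eq_zero_of_abs_lt_dvd hdvd ?_
    have hlt : ((f abar).1 j).natAbs < ℓ₀ ^ N := by
      calc ((f abar).1 j).natAbs < ℓ₀ ^ ((f abar).1 j).natAbs :=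
            Nat.lt_pow_self hℓ₀.one_lt
        _ ≤ ℓ₀ ^ N := Nat.pow_le_pow_right (by omega) (Nat.le_succ _)
    calc |(f abar).1 j| = (((f abar).1 j).natAbs : ℤ) := by rw [Int.abs_eq_natAbs]
      _ < (ℓ₀ : ℤ) ^ N := by exact_mod_cast hlt
  -- torsion components away from p are zero
  have htor : ∀ i, q i ≠ p → (f abar).2 i = 0 := by
    intro i hqi
    obtain ⟨k, hk⟩ := hdiv (q i) (e i) (hq i) hqi
    rw [hk, map_nsmul]
    simp only [Prod.smul_snd, DirectSum.smul_apply, nsmul_eq_mul]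
    simp [ZMod.natCast_self]
  refine ⟨∑ i, e i, ?_⟩
  apply f.injective
  rw [map_nsmul, map_zero]
  apply Prod.ext
  · simp [hfree]
  · apply DFinsupp.ext
    intro i
    show ((p ^ ∑ i, e i) • (f abar).2) i = 0
    rw [DirectSum.smul_apply]
    by_cases hqi : q i = p
    · have hle : e i ≤ ∑ j, e j := Finset.single_le_sum (fun j _ => Nat.zero_le _) (Finset.mem_univ i)
      have hpow : p ^ (∑ j, e j) = p ^ (e i) * p ^ (∑ j, e j - e i) := by
        rw [← pow_add]
        congr 1
        omega
      rw [hpow, mul_comm, mul_smul, nsmul_eq_mul, ← hqi]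
      simp [ZMod.natCast_self]
    · rw [htor i hqi]
      simp
end
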